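/- Let 0 < ε < 1/4 and 0 < L < 3. Let I : ℝ → ℝ³ be a differentiable curve with ‖derivative of I at t‖ = 1 for all t ∈ [0, L] (a unit-speed curve, so its arc length over [0, L] equals L). Let I* : ℝ → ℝ³ be the affine map I*(t) = I(0) + (t/L) • (I(L) − I(0)), which agrees with I at the endpoints 0 and L. If there exists p ∈ [0, L] with ‖I(p) − I*(p)‖ ≥ 3√ε, then L > ‖I(L) − I(0)‖ + ε. -/

import Mathlib

set_option maxHeartbeats 1000000 in
/-- Pure-arithmetic core of the perturbation argument. -/
lemma perturbed_aux (ε L d s α h X Y : ℝ)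
    (hε0 : 0 < ε) (hε : ε < 1/4) (hd0 : 0 ≤ d) (hd3 : d < 3)
    (hs0 : 0 ≤ s) (hs1 : s ≤ 1)
    (hX0 : 0 ≤ X) (hY0 : 0 ≤ Y)
    (hX2 : X^2 = ((s+α)*d)^2 + h^2)
    (hY2 : Y^2 = ((1-s-α)*d)^2 + h^2)
    (hw2 : 9*ε ≤ α^2*d^2 + h^2)
    (hXp : X ≤ s*L) (hYp : Y ≤ (1-s)*L)
    (hXYL : X + Y ≤ L) (hLd : L ≤ d + ε) : False := by
  have haX : (s+α)*d ≤ X := by nlinarith [sq_nonneg h]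
  have hbY : (1-s-α)*d ≤ Y := by nlinarith [sq_nonneg h]
  have hαd : α^2 * d^2 ≤ ε^2 := by
    rcases le_or_gt 0 (α * d) with hsign | hsign
    · have h2 : X ≤ s * d + ε := by
        nlinarith [mul_le_mul_of_nonneg_left hLd hs0, mul_le_of_le_one_left hε0.le hs1]
      have h3 : α * d ≤ ε := by nlinarith [haX, h2]
      have h4 := mul_self_le_mul_self hsign h3
      nlinarith [h4]
    · have h2 : Y ≤ (1 - s) * d + ε := by
        nlinarith [mul_le_mul_of_nonneg_left hLd (by linarith : (0:ℝ) ≤ 1 - s),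
          mul_le_of_le_one_left hε0.le (by linarith : 1 - s ≤ 1)]
      have h3 : -(α * d) ≤ ε := by nlinarith [hbY, h2]
      have h4 := mul_self_le_mul_self (neg_nonneg.2 hsign.le) h3
      nlinarith [h4]
  have hh2 : 9 * ε - ε^2 ≤ h^2 := by nlinarith
  have hprod : (s+α)*d * ((1-s-α)*d) + h^2 ≤ X * Y := by
    nlinarith [sq_nonneg (h*((s+α)*d-(1-s-α)*d)), mul_nonneg hX0 hY0,
      sq_nonneg (X*Y - ((s+α)*d*((1-s-α)*d) + h^2)), sq_nonneg (X*Y + ((s+α)*d*((1-s-α)*d) + h^2))]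
  have hsum : d^2 + 4*h^2 ≤ (X+Y)^2 := by nlinarith
  have hL2 : (X+Y)^2 ≤ L^2 := by nlinarith
  have hLd2 : L^2 ≤ (d+ε)^2 := by nlinarith
  nlinarith

set_option maxHeartbeats 1000000 in
/-- **Perturbing an affine map.** Let `0 < ε < 1/4` and `0 < L < 3`. Let
`I : ℝ → ℝ³` be a differentiable unit-speed curve on `[0, L]` and let
`I* t = I 0 + (t/L) • (I L − I 0)` be the affine interpolation agreeing with `I`
at the endpoints. If `‖I p − I* p‖ ≥ 3√ε` for some `p ∈ [0, L]`, then
`L > ‖I L − I 0‖ + ε`. -/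
theorem perturbed_affine_map
    (ε L : ℝ) (hε0 : 0 < ε) (hε : ε < 1 / 4) (hL0 : 0 < L) (hL : L < 3)
    (I : ℝ → EuclideanSpace ℝ (Fin 3))
    (hdiff : Differentiable ℝ I)
    (hspeed : ∀ t ∈ Set.Icc (0 : ℝ) L, ‖deriv I t‖ = 1)
    (p : ℝ) (hp : p ∈ Set.Icc (0 : ℝ) L)
    (hfar : ‖I p - (I 0 + (p / L) • (I L - I 0))‖ ≥ 3 * Real.sqrt ε) :
    L > ‖I L - I 0‖ + ε := by
  obtain ⟨hp0, hpL⟩ := hp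
  by_contra hcon
  push_neg at hcon
  -- mean value bound
  have key : ∀ x ∈ Set.Icc (0:ℝ) L, ∀ y ∈ Set.Icc (0:ℝ) L, ‖I y - I x‖ ≤ 1 * ‖y - x‖ := by
    intro x hx y hy
    exact Convex.norm_image_sub_le_of_norm_deriv_le (fun z _ => hdiff z)
      (fun z hz => le_of_eq (hspeed z hz)) (convex_Icc 0 L) hx hy
  have h0L : (0:ℝ) ∈ Set.Icc (0:ℝ) L := ⟨le_refl _, hL0.le⟩
  have hLL : L ∈ Set.Icc (0:ℝ) L := ⟨hL0.le, le_refl _⟩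
  have hpI : p ∈ Set.Icc (0:ℝ) L := ⟨hp0, hpL⟩
  have hX : ‖I p - I 0‖ ≤ p := by
    have := key 0 h0L p hpI; simpa [abs_of_nonneg hp0] using this
  have hY : ‖I L - I p‖ ≤ L - p := by
    have := key p hpI L hLL
    rw [one_mul, Real.norm_eq_abs, abs_of_nonneg (by linarith)] at this
    exact this
  have hd : ‖I L - I 0‖ ≤ L := by
    have := key 0 h0L L hLL
    rw [one_mul, Real.norm_eq_abs, sub_zero, abs_of_nonneg hL0.le] at this
    exact this
  set u : EuclideanSpace ℝ (Fin 3) := I L - I 0 with hu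
  set s : ℝ := p / L with hs
  set w : EuclideanSpace ℝ (Fin 3) := I p - (I 0 + s • u) with hw
  set d : ℝ := ‖u‖ with hd2
  have hd0 : 0 ≤ d := norm_nonneg _
  have hs0 : 0 ≤ s := div_nonneg hp0 hL0.le
  have hs1 : s ≤ 1 := (div_le_one hL0).2 hpL
  have hps : p = s * L := by rw [hs, div_mul_cancel₀ _ hL0.ne']
  have hw2 : (9:ℝ) * ε ≤ ‖w‖^2 := by
    have h1 : (3 * Real.sqrt ε)^2 ≤ ‖w‖^2 := by
      apply pow_le_pow_left₀ (by positivity) hfar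
    rw [mul_pow, Real.sq_sqrt hε0.le] at h1
    linarith
  by_cases hdz : d = 0
  · -- degenerate case: I L = I 0
    have hu0 : u = 0 := norm_eq_zero.mp hdz
    have hIL : I L = I 0 := by rw [hu] at hu0; exact sub_eq_zero.mp hu0
    have hwx : w = I p - I 0 := by rw [hw, hu0]; simp
    have hwy : I L - I p = -w := by rw [hwx, hIL]; abel
    have h1 : 3 * Real.sqrt ε ≤ ‖I p - I 0‖ := by rw [← hwx]; exact hfar
    have h2 : 3 * Real.sqrt ε ≤ ‖I L - I p‖ := by rw [hwy, norm_neg]; exact hfar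
    have hse : ε ≤ Real.sqrt ε := by
      have ht := Real.sq_sqrt hε0.le
      have ht0 := Real.sqrt_nonneg ε
      have ht1 : Real.sqrt ε < 1 := by
        rw [show (1:ℝ) = Real.sqrt 1 by simp]
        exact Real.sqrt_lt_sqrt hε0.le (by linarith)
      nlinarith
    have hL6 : 6 * Real.sqrt ε ≤ L := by linarith
    have hdd : d = 0 := hdz
    nlinarith [Real.sqrt_nonneg ε]
  · have hune : u ≠ 0 := fun h0 => hdz (by rw [hd2, h0, norm_zero])
    have hdne : (‖u‖:ℝ)^2 ≠ 0 := pow_ne_zero 2 (norm_ne_zero_iff.mpr hune)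
    set α : ℝ := (inner ℝ w u : ℝ) / ‖u‖^2 with hα
    set v : EuclideanSpace ℝ (Fin 3) := w - α • u with hv
    have hvu : (inner ℝ v u : ℝ) = 0 := by
      rw [hv, inner_sub_left, real_inner_smul_left, real_inner_self_eq_norm_sq, hα,
        div_mul_cancel₀ _ hdne, sub_self]
    have hwd : w = α • u + v := by rw [hv]; abel
    have hxd : I p - I 0 = (s + α) • u + v := by
      rw [hv, hw, hu]; module
    have hyd : I L - I p = (1 - s - α) • u + (-v) := by
      rw [hv, hw, hu]; module
    -- norm computations
    have normsq : ∀ (c : ℝ) (z : EuclideanSpace ℝ (Fin 3)), (inner ℝ z u : ℝ) = 0 →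
        ‖c • u + z‖^2 = c^2 * d^2 + ‖z‖^2 := by
      intro c z hz
      rw [norm_add_sq_real, real_inner_smul_left,
        show (inner ℝ u z : ℝ) = 0 by rw [real_inner_comm]; exact hz,
        norm_smul, mul_pow, hd2]
      simp [Real.norm_eq_abs, sq_abs]
    have hvu' : (inner ℝ (-v) u : ℝ) = 0 := by rw [inner_neg_left, hvu]; ring
    have hX2 : ‖I p - I 0‖^2 = ((s + α)*d)^2 + ‖v‖^2 := by
      rw [hxd, normsq _ _ hvu]; ring
    have hY2 : ‖I L - I p‖^2 = ((1 - s - α)*d)^2 + ‖v‖^2 := by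
      rw [hyd, normsq _ _ hvu', norm_neg]; ring
    have hW2 : (9:ℝ) * ε ≤ α^2 * d^2 + ‖v‖^2 := by
      have := normsq α v hvu
      rw [← hwd] at this
      linarith [hw2, this.ge, this.le]
    have hXp : ‖I p - I 0‖ ≤ s * L := by rw [← hps]; exact hX
    have hYp : ‖I L - I p‖ ≤ (1 - s) * L := by
      have : (1 - s) * L = L - p := by rw [hps]; ring
      rw [this]; exact hY
    exact perturbed_aux ε L d s α ‖v‖ ‖I p - I 0‖ ‖I L - I p‖
      hε0 (by linarith) hd0 (lt_of_le_of_lt hd hL) hs0 hs1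
      (norm_nonneg _) (norm_nonneg _) hX2 hY2 hW2 hXp hYp
      (by linarith) hcon
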